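/- If v ∈ RG satisfies v = v^T, v² = 0, and the row space C(v) of σ(v) has cardinality |R|^{n/2}, then C(v) is a self-dual code of length n over R. -/

import Mathlib

/-- The matrix σ(v) of a group ring element, with (i,j) entry the coefficient of i⁻¹ * j. -/
noncomputable def sigmaMat {R G : Type*} [Semiring R] [Group G] (v : MonoidAlgebra R G) :
    Matrix G G R := Matrix.of fun i j => v.coeff (i⁻¹ * j)

/-- The canonical involution on a group ring, sending Σ αᵢ gᵢ to Σ αᵢ gᵢ⁻¹. -/
noncomputable def transInvol {R G : Type*} [Semiring R] [Group G] (v : MonoidAlgebra R G) :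
    MonoidAlgebra R G := MonoidAlgebra.ofCoeff (Finsupp.equivMapDomain (Equiv.inv G) v.coeff)
/-- The Euclidean dual of a linear code C ⊆ R^ι. -/
noncomputable def dualCode {R ι : Type*} [CommRing R] [Fintype ι] (C : Submodule R (ι → R)) :
    Submodule R (ι → R) where
  carrier := {x | ∀ c ∈ C, ∑ i, x i * c i = 0}
  add_mem' := by
    intro a b ha hb c hc
    have h1 := ha c hc
    have h2 := hb c hc
    simp only [Pi.add_apply, add_mul, Finset.sum_add_distrib, h1, h2, add_zero]
  zero_mem' := by intro c hc; simp
  smul_mem' := by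
    intro r x hx c hc
    have h := hx c hc
    simp only [Pi.smul_apply, smul_eq_mul, mul_assoc]
    rw [← Finset.mul_sum, h, mul_zero]

lemma conv_apply {R G : Type*} [Semiring R] [Group G] [Fintype G] [DecidableEq G]
    (f g : MonoidAlgebra R G) (x : G) :
    (f * g).coeff x = ∑ a : G, f.coeff a * g.coeff (a⁻¹ * x) := by
  rw [MonoidAlgebra.mul_apply_antidiagonal f g x
    (Finset.univ.filter fun p : G × G => p.1 * p.2 = x) (by simp)]
  refine Finset.sum_bij' (fun p _ => p.1) (fun a _ => (a, a⁻¹ * x)) ?_ ?_ ?_ ?_ ?_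
  · intros; simp
  · intro a _; simp
  · intro p hp; simp only [Finset.mem_filter] at hp
    obtain ⟨-, h⟩ := hp
    ext <;> simp [← h]
  · intros; rfl
  · intro p hp; simp only [Finset.mem_filter] at hp
    obtain ⟨-, h⟩ := hp
    rw [← h, ← mul_assoc, inv_mul_cancel, one_mul]

lemma dualCode_map {R ι κ : Type*} [CommRing R] [Fintype ι] [Fintype κ] (e : ι ≃ κ)
    (C : Submodule R (ι → R)) :
    dualCode (C.map (LinearEquiv.funCongrLeft R R e.symm).toLinearMap)
      = (dualCode C).map (LinearEquiv.funCongrLeft R R e.symm).toLinearMap := by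
  set L := LinearEquiv.funCongrLeft R R e.symm
  ext x
  have hL : ∀ (f : ι → R) (k : κ), L f k = f (e.symm k) := fun _ _ => rfl
  constructor
  · intro hx
    refine ⟨fun i => x (e i), ?_, ?_⟩
    · intro c hc
      have := hx (L c) (Submodule.mem_map_of_mem hc)
      calc ∑ i, x (e i) * c i = ∑ k, x k * c (e.symm k) := by
            rw [← Equiv.sum_comp e (fun k => x k * c (e.symm k))]; simp
        _ = 0 := by simpa [hL] using this
    · funext k; simp [hL]
  · rintro ⟨y, hy, rfl⟩ c hc
    rw [Submodule.mem_map] at hc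
    obtain ⟨d, hd, rfl⟩ := hc
    have := hy d hd
    calc ∑ k, L y k * L d k = ∑ k, y (e.symm k) * d (e.symm k) := by simp [hL]
      _ = ∑ i, y i * d i := Equiv.sum_comp e.symm (fun i => y i * d i)
      _ = 0 := this

/-- Over a finite commutative Frobenius ring, if v = vᵀ, v² = 0 and |C(v)| = |R|^(n/2),
    then the row space C(v) of σ(v) is a self-dual code of length n. -/
theorem stmt_11 (R G : Type*) [CommRing R] [Fintype R] [Group G] [Fintype G] [DecidableEq G]
    (hFrob : ∀ (ι : Type) [Fintype ι] (C : Submodule R (ι → R)),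
      Nat.card C * Nat.card (dualCode C) = Nat.card R ^ Fintype.card ι)
    (heven : Even (Fintype.card G))
    (v : MonoidAlgebra R G) (hvT : transInvol v = v) (hv2 : v * v = 0)
    (hcard : Nat.card (Submodule.span R (Set.range fun i => sigmaMat v i))
      = Nat.card R ^ (Fintype.card G / 2)) :
    Submodule.span R (Set.range fun i => sigmaMat v i)
      = dualCode (Submodule.span R (Set.range fun i => sigmaMat v i)) := by

  set C := Submodule.span R (Set.range fun i => sigmaMat v i) with hC
  have hvsym : ∀ g : G, v.coeff g⁻¹ = v.coeff g := by
    intro g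
    conv_rhs => rw [← hvT]
    rfl
  -- orthogonality of rows
  have horth : ∀ i k : G, ∑ j : G, sigmaMat v i j * sigmaMat v k j = 0 := by
    intro i k
    have : ∑ j : G, sigmaMat v i j * sigmaMat v k j
        = ∑ j : G, v.coeff (i⁻¹ * j) * v.coeff (j⁻¹ * k) := by
      refine Finset.sum_congr rfl fun j _ => ?_
      have : v.coeff (k⁻¹ * j) = v.coeff (j⁻¹ * k) := by
        rw [← hvsym (j⁻¹ * k)]; simp [mul_inv_rev]
      simp [sigmaMat, this]
    rw [this]
    have := conv_apply v v (i⁻¹ * k)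
    rw [hv2] at this
    have hre : ∑ j : G, v.coeff (i⁻¹ * j) * v.coeff (j⁻¹ * k)
        = ∑ a : G, v.coeff a * v.coeff (a⁻¹ * (i⁻¹ * k)) := by
      rw [← Equiv.sum_comp (Equiv.mulLeft i) (fun j => v.coeff (i⁻¹ * j) * v.coeff (j⁻¹ * k))]
      refine Finset.sum_congr rfl fun a _ => ?_
      simp [mul_assoc, mul_inv_rev]
    rw [hre, ← this]
    simp
  -- self-orthogonality
  have hsub : C ≤ dualCode C := by
    rw [hC, Submodule.span_le]
    rintro _ ⟨i, rfl⟩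
    intro c hc
    rw [← hC] at hc
    induction hc using Submodule.span_induction with
    | mem x hx =>
      obtain ⟨k, rfl⟩ := hx
      exact horth i k
    | zero => simp
    | add x y _ _ hx hy =>
      simp only [Pi.add_apply, mul_add, Finset.sum_add_distrib, hx, hy, add_zero]
    | smul r x _ hx =>
      simp only [Pi.smul_apply, smul_eq_mul]
      rw [Finset.sum_congr rfl fun j _ => (mul_left_comm _ r _), ← Finset.mul_sum, hx, mul_zero]
  -- cardinality of the dual
  set n := Fintype.card G with hn
  have hRpos : 0 < Nat.card R ^ (n / 2) := by
    have : 0 < Nat.card R := Nat.card_pos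
    positivity
  have e : G ≃ Fin n := Fintype.equivFin G
  set L := LinearEquiv.funCongrLeft R R e.symm
  have hF := hFrob (Fin n) (C.map L.toLinearMap)
  rw [dualCode_map e C] at hF
  have hc1 : Nat.card (C.map L.toLinearMap) = Nat.card C :=
    Nat.card_congr (Submodule.equivMapOfInjective L.toLinearMap L.injective C).symm.toEquiv
  have hc2 : Nat.card ((dualCode C).map L.toLinearMap) = Nat.card (dualCode C) :=
    Nat.card_congr (Submodule.equivMapOfInjective L.toLinearMap L.injective _).symm.toEquiv
  rw [hc1, hc2, Fintype.card_fin, hcard] at hF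
  have hsplit : Nat.card R ^ n = Nat.card R ^ (n / 2) * Nat.card R ^ (n / 2) := by
    rw [← pow_add]
    congr 1
    obtain ⟨m, hm⟩ := heven
    omega
  rw [hsplit] at hF
  have hdcard : Nat.card (dualCode C) = Nat.card R ^ (n / 2) :=
    Nat.eq_of_mul_eq_mul_left hRpos hF
  -- conclude equality
  have hfin : (dualCode C : Set (G → R)).Finite := Set.toFinite _
  have hcards : (dualCode C : Set (G → R)).ncard ≤ (C : Set (G → R)).ncard := by
    rw [← Nat.card_coe_set_eq, ← Nat.card_coe_set_eq]
    rw [show Nat.card (C : Set (G → R)) = Nat.card C from rfl,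
        show Nat.card ((dualCode C) : Set (G → R)) = Nat.card (dualCode C) from rfl,
        hdcard, hcard]
  exact SetLike.ext' (Set.eq_of_subset_of_ncard_le hsub hcards hfin)
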